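/- For the scalar ODE ρ̇ = -h(ρ)·ρ where h : ℝ → ℝ is continuous, h > 0 on [0, r), and h(r) = 0, every solution with initial condition ρ(0) = ρ₀ ∈ (0, r) satisfies ρ(t) ∈ (0, r) for all t ≥ 0 and ρ(t) → 0 as t → ∞; moreover the solution ρ ≡ r is an equilibrium. -/

import Mathlib

open Filter Topology

theorem stmt_8
    (h : ℝ → ℝ) (hc : Continuous h) (r : ℝ) (hr : 0 < r)
    (hpos : ∀ s ∈ Set.Ico (0 : ℝ) r, 0 < h s) (hzero : h r = 0) :
    (∀ ρ : ℝ → ℝ, (∀ t, HasDerivAt ρ (-h (ρ t) * ρ t) t) →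
      ∀ ρ₀ ∈ Set.Ioo (0 : ℝ) r, ρ 0 = ρ₀ →
        (∀ t ≥ 0, ρ t ∈ Set.Ioo (0 : ℝ) r) ∧ Tendsto ρ atTop (𝓝 0)) ∧
    (∀ t : ℝ, HasDerivAt (fun _ : ℝ => r) (-h r * r) t) := by
  constructor
  · intro ρ hρ ρ₀ hρ₀ h0
    have hdiff : Differentiable ℝ ρ := fun t => (hρ t).differentiableAt
    have hcρ : Continuous ρ := hdiff.continuous
    have hderiv : ∀ t, deriv ρ t = -h (ρ t) * ρ t := fun t => (hρ t).deriv
    -- Invariance: ρ t ∈ (0, r) for t ≥ 0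
    have key : ∀ t ≥ 0, ρ t ∈ Set.Ioo (0:ℝ) r := by
      by_contra hcon
      push_neg at hcon
      obtain ⟨t₁, ht₁, hmem⟩ := hcon
      set E : Set ℝ := {t | 0 ≤ t ∧ ρ t ∉ Set.Ioo (0:ℝ) r} with hEdef
      have hEne : E.Nonempty := ⟨t₁, ht₁, hmem⟩
      have hEbdd : BddBelow E := ⟨0, fun x hx => hx.1⟩
      have hEclosed : IsClosed E := by
        have hEq : E = Set.Ici 0 ∩ ρ ⁻¹' (Set.Ioo (0:ℝ) r)ᶜ := by
          ext x; simp [hEdef, Set.mem_Ici]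
        rw [hEq]
        exact isClosed_Ici.inter (isOpen_Ioo.isClosed_compl.preimage hcρ)
      set T := sInf E with hTdef
      have hTE : T ∈ E := hEclosed.csInf_mem hEne hEbdd
      have hT0 : 0 < T := by
        rcases lt_or_eq_of_le hTE.1 with hlt | heq
        · exact hlt
        · exfalso; apply hTE.2; rw [← heq, h0]; exact hρ₀
      have hbefore : ∀ s, 0 ≤ s → s < T → ρ s ∈ Set.Ioo (0:ℝ) r := by
        intro s hs hsT
        by_contra hns
        exact absurd (csInf_le hEbdd ⟨hs, hns⟩) (not_le.2 hsT)
      -- ρ T ∈ [0, r]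
      have hρT : ρ T ∈ Set.Icc (0:ℝ) r := by
        have h1 : ContinuousWithinAt ρ (Set.Ico 0 T) T := hcρ.continuousWithinAt
        have h2 : T ∈ closure (Set.Ico (0:ℝ) T) := by
          rw [closure_Ico (ne_of_lt hT0)]
          exact Set.right_mem_Icc.2 hT0.le
        have h3 := h1.mem_closure_image h2
        have h4 : ρ '' Set.Ico 0 T ⊆ Set.Ioo 0 r := by
          rintro _ ⟨s, hs, rfl⟩; exact hbefore s hs.1 hs.2
        have h5 := closure_mono h4 h3
        rwa [closure_Ioo (ne_of_lt hr)] at h5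
      -- ρ is antitone on [0, T]
      have hantiT : AntitoneOn ρ (Set.Icc 0 T) := by
        apply antitoneOn_of_deriv_nonpos (convex_Icc 0 T) hcρ.continuousOn
        · intro x _; exact (hdiff x).differentiableWithinAt
        · intro x hx
          rw [interior_Icc] at hx
          rw [hderiv]
          have hm := hbefore x hx.1.le hx.2
          have hp := hpos (ρ x) ⟨hm.1.le, hm.2⟩
          nlinarith [hm.1]
      have hTρ₀ : ρ T ≤ ρ₀ := by
        have := hantiT (Set.left_mem_Icc.2 hT0.le) (Set.right_mem_Icc.2 hT0.le) hT0.le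
        rwa [h0] at this
      have hcase : ρ T = 0 ∨ ρ T = r := by
        rcases hρT with ⟨ha, hb⟩
        rcases eq_or_lt_of_le ha with h1 | h1
        · exact Or.inl h1.symm
        rcases eq_or_lt_of_le hb with h2 | h2
        · exact Or.inr h2
        exact absurd ⟨h1, h2⟩ hTE.2
      rcases hcase with hT0' | hTr
      · -- ρ T = 0 : contradiction via Gronwall-type lower bound
        obtain ⟨x₀, hx₀mem, hx₀⟩ :=
          (isCompact_Icc (a := (0:ℝ)) (b := ρ₀)).exists_isMaxOn
            ⟨0, le_refl 0, hρ₀.1.le⟩ hc.continuousOn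
        set M := h x₀ with hMdef
        -- ρ s ∈ [0, ρ₀] for s ∈ [0, T]
        have hrange : ∀ s ∈ Set.Icc (0:ℝ) T, ρ s ∈ Set.Icc (0:ℝ) ρ₀ := by
          intro s hs
          constructor
          · rcases eq_or_lt_of_le hs.2 with hsT | hsT
            · rw [hsT, hT0']
            · exact (hbefore s hs.1 hsT).1.le
          · have := hantiT (Set.left_mem_Icc.2 hT0.le) hs hs.1
            rwa [h0] at this
        set g : ℝ → ℝ := fun s => ρ s * Real.exp (M * s) with hgdef
        have hg : ∀ s, HasDerivAt g
            ((-h (ρ s) * ρ s) * Real.exp (M * s) + ρ s * (Real.exp (M * s) * M)) s := by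
          intro s
          have hexp : HasDerivAt (fun s : ℝ => Real.exp (M * s)) (Real.exp (M * s) * M) s := by
            have h1 : HasDerivAt (fun s : ℝ => M * s) M s := by
              simpa using (hasDerivAt_id s).const_mul M
            exact (Real.hasDerivAt_exp (M * s)).comp s h1
          exact (hρ s).mul hexp
        have hgc : Continuous g := by
          exact hcρ.mul ((Real.continuous_exp).comp (continuous_const.mul continuous_id))
        have hmono : MonotoneOn g (Set.Icc 0 T) := by
          apply monotoneOn_of_deriv_nonneg (convex_Icc 0 T) hgc.continuousOn
          · intro x _; exact (hg x).differentiableAt.differentiableWithinAt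
          · intro x hx
            rw [interior_Icc] at hx
            rw [(hg x).deriv]
            have hrx := hrange x ⟨hx.1.le, hx.2.le⟩
            have hMb : h (ρ x) ≤ M := hx₀ hrx
            have hep := Real.exp_pos (M * x)
            nlinarith [mul_nonneg (mul_nonneg hrx.1 hep.le) (sub_nonneg.2 hMb)]
        have hg0 : g 0 = ρ₀ := by simp [hgdef, h0]
        have hgT : g T = 0 := by simp [hgdef, hT0']
        have := hmono (Set.left_mem_Icc.2 hT0.le) (Set.right_mem_Icc.2 hT0.le) hT0.le
        rw [hg0, hgT] at this
        exact absurd this (not_le.2 hρ₀.1)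
      · -- ρ T = r : contradicts ρ T ≤ ρ₀ < r
        rw [hTr] at hTρ₀
        exact absurd (lt_of_le_of_lt hTρ₀ hρ₀.2) (lt_irrefl r)
    -- antitone on [0, ∞)
    have hanti : AntitoneOn ρ (Set.Ici 0) := by
      apply antitoneOn_of_deriv_nonpos (convex_Ici 0) hcρ.continuousOn
      · intro x _; exact (hdiff x).differentiableWithinAt
      · intro x hx
        rw [interior_Ici] at hx
        rw [hderiv]
        have hm := key x hx.le
        have hp := hpos (ρ x) ⟨hm.1.le, hm.2⟩
        nlinarith [hm.1]
    refine ⟨key, ?_⟩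
    rw [tendsto_order]
    constructor
    · intro a ha
      filter_upwards [eventually_ge_atTop (0:ℝ)] with t ht
      exact ha.trans (key t ht).1
    · intro ε hε
      have hex : ∃ t₀ ≥ (0:ℝ), ρ t₀ < ε := by
        by_cases hcase : ρ₀ < ε
        · exact ⟨0, le_refl 0, by rw [h0]; exact hcase⟩
        · push_neg at hcase
          by_contra hno
          push_neg at hno
          obtain ⟨m, hmmem, hm⟩ :=
            (isCompact_Icc (a := ε) (b := ρ₀)).exists_isMinOn
              ⟨ε, le_refl ε, hcase⟩ hc.continuousOn
          have hmpos : 0 < h m :=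
            hpos m ⟨hε.le.trans hmmem.1, lt_of_le_of_lt hmmem.2 hρ₀.2⟩
          set c := h m * ε with hcdef
          have hcpos : 0 < c := mul_pos hmpos hε
          set ψ : ℝ → ℝ := fun t => ρ t + c * t with hψdef
          have hψd : ∀ t, HasDerivAt ψ (-h (ρ t) * ρ t + c) t := by
            intro t
            have h1 : HasDerivAt (fun t : ℝ => c * t) c t := by
              simpa using (hasDerivAt_id t).const_mul c
            exact (hρ t).add h1
          have hψc : Continuous ψ := hcρ.add (continuous_const.mul continuous_id)
          have hψanti : AntitoneOn ψ (Set.Ici 0) := by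
            apply antitoneOn_of_deriv_nonpos (convex_Ici 0) hψc.continuousOn
            · intro x _; exact (hψd x).differentiableAt.differentiableWithinAt
            · intro x hx
              rw [interior_Ici] at hx
              rw [(hψd x).deriv]
              have hρx : ρ x ∈ Set.Icc ε ρ₀ := by
                constructor
                · exact hno x hx.le
                · have := hanti (Set.mem_Ici.2 le_rfl) (Set.mem_Ici.2 (le_of_lt hx)) hx.le
                  rwa [h0] at this
              have hhm : h m ≤ h (ρ x) := hm hρx
              nlinarith [hρx.1]
          set t₁ := (ρ₀ - ε) / c + 1 with ht₁def
          have ht₁pos : 0 < t₁ := by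
            have hd : 0 ≤ (ρ₀ - ε) / c := div_nonneg (by linarith) hcpos.le
            rw [ht₁def]; linarith
          have hψle := hψanti (Set.mem_Ici.2 le_rfl) ht₁pos.le ht₁pos.le
          have hψ0 : ψ 0 = ρ₀ := by simp [hψdef, h0]
          rw [hψ0] at hψle
          have hct₁ : c * t₁ = (ρ₀ - ε) + c := by
            rw [ht₁def]
            field_simp
          have : ρ t₁ ≤ ε - c := by
            have : ρ t₁ + c * t₁ ≤ ρ₀ := hψle
            rw [hct₁] at this
            linarith
          have := hno t₁ ht₁pos.le
          linarith
      obtain ⟨t₀, ht₀, hlt⟩ := hex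
      filter_upwards [eventually_ge_atTop t₀] with t ht
      calc ρ t ≤ ρ t₀ := hanti ht₀ (ht₀.trans ht) ht
        _ < ε := hlt
  · intro t
    simpa [hzero] using hasDerivAt_const t r
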